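/- Strict dominance by a mixed strategy is a hereditary dominance relation: if R →_SM R' is a reduction step eliminating only strategies strictly dominated in R by mixed strategies over R, and a strategy s_i present in R' is strictly dominated in R by a mixed strategy over R_i, then s_i is strictly dominated in R' by a mixed strategy over R'_i. -/

import Mathlib

open Finset

/-- A mixed strategy of player `i` over `R i`: a probability distribution on
`S i` supported on `R i`. -/
def Mixed {ι : Type*} {S : ι → Type*} [∀ i, Fintype (S i)]
    (R : ∀ j, Finset (S j)) (i : ι) (m : S i → ℝ) : Prop :=
  (∀ t, 0 ≤ m t) ∧ (∀ t, m t ≠ 0 → t ∈ R i) ∧ (∑ t : S i, m t) = 1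

/-- Expected payoff of the mixed strategy `m` of player `i` against the joint
strategy of the opponents encoded by the profile `σ`. -/
def MixPay {ι : Type*} [DecidableEq ι] {S : ι → Type*} [∀ i, Fintype (S i)]
    (p : ι → (∀ j, S j) → ℝ) (i : ι) (m : S i → ℝ) (σ : ∀ j, S j) : ℝ :=
  ∑ t : S i, m t * p i (Function.update σ i t)

/-- `s` is strictly dominated in `R` by the mixed strategy `m`: against every
joint strategy of the opponents from `R`, `m` has a strictly higher expected
payoff than `s`. -/
def MDominates {ι : Type*} [DecidableEq ι] {S : ι → Type*} [∀ i, Fintype (S i)]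
    (p : ι → (∀ j, S j) → ℝ) (R : ∀ j, Finset (S j)) (i : ι)
    (m : S i → ℝ) (s : S i) : Prop :=
  ∀ σ : ∀ j, S j, (∀ j, j ≠ i → σ j ∈ R j) →
    p i (Function.update σ i s) < MixPay p i m σ

/-- The reduction relation `R →_SM R'` of elimination of strategies strictly
dominated by mixed strategies. -/
def StepSM {ι : Type*} [DecidableEq ι] {S : ι → Type*} [∀ i, Fintype (S i)]
    (p : ι → (∀ j, S j) → ℝ) (R R' : ∀ j, Finset (S j)) : Prop :=
  R ≠ R' ∧ (∀ j, R' j ⊆ R j) ∧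
    ∀ j, ∀ s ∈ R j, s ∉ R' j → ∃ m : S j → ℝ, Mixed R j m ∧ MDominates p R j m s

open Finset in
/-- A pointwise `Finset.inf'` of continuous real-valued functions is continuous. -/
lemma continuous_finset_inf'_aux {β α : Type*} [TopologicalSpace β]
    {T : Finset α} (hT : T.Nonempty) (g : α → β → ℝ) (hg : ∀ a, Continuous (g a)) :
    Continuous fun b => T.inf' hT fun a => g a b := by
  induction hT using Finset.Nonempty.cons_induction with
  | singleton a => simpa using hg a
  | cons a s h hs ih =>
    simp only [Finset.inf'_cons hs]
    exact (hg a).min ih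

/-- Strict dominance by a mixed strategy is hereditary: if `R →_SM R'` and a
strategy present in `R'` is strictly dominated in `R` by a mixed strategy over
`R i`, then it is strictly dominated in `R'` by a mixed strategy over `R' i`. -/
theorem mixed_strict_dominance_hereditary
    {ι : Type*} [Fintype ι] [DecidableEq ι] {S : ι → Type*}
    [∀ i, Fintype (S i)] [∀ i, Nonempty (S i)] [∀ i, DecidableEq (S i)]
    (p : ι → (∀ j, S j) → ℝ) (R R' : ∀ j, Finset (S j))
    (hR : ∀ j, (R j).Nonempty) (hR' : ∀ j, (R' j).Nonempty)
    (hstep : StepSM p R R')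
    (i : ι) (s : S i) (hs : s ∈ R' i)
    (hdom : ∃ m : S i → ℝ, Mixed R i m ∧ MDominates p R i m s) :
    ∃ m : S i → ℝ, Mixed R' i m ∧ MDominates p R' i m s := by
  classical
  obtain ⟨hne, hsub, hdomstep⟩ := hstep
  obtain ⟨m0, hm0mix, hm0dom⟩ := hdom
  set T : Finset (∀ j, S j) :=
    Finset.univ.filter (fun σ => ∀ j, j ≠ i → σ j ∈ R' j) with hTdef
  have hTmem : ∀ σ : ∀ j, S j, σ ∈ T ↔ ∀ j, j ≠ i → σ j ∈ R' j := by
    intro σ; simp [hTdef]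
  have hTne : T.Nonempty := by
    refine ⟨fun j => (hR' j).choose, ?_⟩
    rw [hTmem]; intro j _; exact (hR' j).choose_spec
  set g : (∀ j, S j) → (S i → ℝ) → ℝ :=
    fun σ m => MixPay p i m σ - p i (Function.update σ i s) with hgdef
  set F : (S i → ℝ) → ℝ := fun m => T.inf' hTne (fun σ => g σ m) with hFdef
  have hgcont : ∀ σ, Continuous (g σ) := by
    intro σ
    refine Continuous.sub ?_ continuous_const
    exact continuous_finset_sum _ fun t _ => (continuous_apply t).mul continuous_const
  have hFcont : Continuous F := continuous_finset_inf'_aux hTne g hgcont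
  set K : Set (S i → ℝ) := {m | Mixed R i m} with hKdef
  have hKsub : K ⊆ stdSimplex ℝ (S i) := fun m hm => ⟨hm.1, hm.2.2⟩
  have hKclosed : IsClosed K := by
    have hKeq : K = (⋂ t, {m : S i → ℝ | 0 ≤ m t}) ∩
        ((⋂ t, ⋂ _ : t ∉ R i, {m : S i → ℝ | m t = 0}) ∩
          {m : S i → ℝ | (∑ t : S i, m t) = 1}) := by
      ext m
      simp only [hKdef, Mixed, Set.mem_setOf_eq, Set.mem_inter_iff, Set.mem_iInter]
      constructor
      · rintro ⟨h1, h2, h3⟩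
        exact ⟨h1, fun t ht => by_contra fun hmt => ht (h2 t hmt), h3⟩
      · rintro ⟨h1, h2, h3⟩
        exact ⟨h1, fun t hmt => by_contra fun ht => hmt (h2 t ht), h3⟩
    rw [hKeq]
    refine (isClosed_iInter fun t =>
      isClosed_le continuous_const (continuous_apply t)).inter (IsClosed.inter ?_ ?_)
    · exact isClosed_iInter fun t => isClosed_iInter fun _ =>
        isClosed_eq (continuous_apply t) continuous_const
    · exact isClosed_eq (continuous_finset_sum _ fun t _ => continuous_apply t)
        continuous_const
  have hKcomp : IsCompact K := (isCompact_stdSimplex ℝ (S i)).of_isClosed_subset hKclosed hKsub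
  obtain ⟨mstar, hmK, hmax⟩ := hKcomp.exists_isMaxOn ⟨m0, hm0mix⟩ hFcont.continuousOn
  have hmKmix : Mixed R i mstar := hmK
  -- the maximizer is supported on `R' i`
  have hsupp : ∀ t, mstar t ≠ 0 → t ∈ R' i := by
    intro t htne
    by_contra htR'
    have htR : t ∈ R i := hmKmix.2.1 t htne
    have htpos : 0 < mstar t := lt_of_le_of_ne (hmKmix.1 t) (Ne.symm htne)
    obtain ⟨mt, hmtmix, hmtdom⟩ := hdomstep i t htR htR'
    set m' : S i → ℝ := fun u => (if u = t then 0 else mstar u) + mstar t * mt u with hm'def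
    have hm'mix : Mixed R i m' := by
      refine ⟨?_, ?_, ?_⟩
      · intro u
        have h1 : (0:ℝ) ≤ if u = t then 0 else mstar u := by
          split <;> [exact le_refl 0; exact hmKmix.1 u]
        have h2 : (0:ℝ) ≤ mstar t * mt u := mul_nonneg (hmKmix.1 t) (hmtmix.1 u)
        simpa [hm'def] using add_nonneg h1 h2
      · intro u hu
        by_cases h1 : (if u = t then (0:ℝ) else mstar u) = 0
        · have h2 : mstar t * mt u ≠ 0 := by
            intro h; apply hu; simp [hm'def, h1, h]
          have : mt u ≠ 0 := fun h => h2 (by simp [h])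
          exact hmtmix.2.1 u this
        · have hut : u ≠ t := by intro h; apply h1; simp [h]
          have : mstar u ≠ 0 := by simpa [hut] using h1
          exact hmKmix.2.1 u this
      · have e1 : ∑ u : S i, (if u = t then (0:ℝ) else mstar u)
            = (∑ u : S i, mstar u) - mstar t := by
          have : ∑ u : S i, (mstar u - (if u = t then (0:ℝ) else mstar u))
              = ∑ u : S i, (if u = t then mstar u else 0) := by
            apply Finset.sum_congr rfl; intro u _; split <;> simp_all
          rw [Finset.sum_sub_distrib] at this
          rw [Finset.sum_ite_eq' Finset.univ t mstar] at this
          simp only [Finset.mem_univ, if_true] at this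
          linarith
        have e2 : ∑ u : S i, mstar t * mt u = mstar t := by
          rw [← Finset.mul_sum, hmtmix.2.2, mul_one]
        rw [hm'def]
        simp only
        rw [Finset.sum_add_distrib, e1, e2, hmKmix.2.2]
        ring
    -- expected payoff of m' strictly exceeds that of mstar on every σ ∈ T
    have hkey : ∀ σ ∈ T, g σ mstar < g σ m' := by
      intro σ hσ
      have hσR : ∀ j, j ≠ i → σ j ∈ R j := fun j hj => hsub j ((hTmem σ).1 hσ j hj)
      have hdomt : p i (Function.update σ i t) < MixPay p i mt σ := hmtdom σ hσR
      have epay : MixPay p i m' σ = MixPay p i mstar σ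
          - mstar t * p i (Function.update σ i t) + mstar t * MixPay p i mt σ := by
        have l2 : ∑ u : S i, (if u = t then (0:ℝ) else mstar u) * p i (Function.update σ i u)
            = (∑ u : S i, mstar u * p i (Function.update σ i u))
              - mstar t * p i (Function.update σ i t) := by
          have h := Finset.sum_ite_eq' Finset.univ t
            (fun u => mstar u * p i (Function.update σ i u))
          simp only [Finset.mem_univ, if_true] at h
          have hsum : ∑ u : S i, (mstar u * p i (Function.update σ i u)
              - (if u = t then (0:ℝ) else mstar u) * p i (Function.update σ i u))
              = ∑ u : S i, (if u = t then mstar u * p i (Function.update σ i u) else 0) := by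
            apply Finset.sum_congr rfl; intro u _; split <;> simp_all
          rw [Finset.sum_sub_distrib, h] at hsum
          linarith
        simp only [MixPay, hm'def]
        calc ∑ u : S i, ((if u = t then (0:ℝ) else mstar u) + mstar t * mt u)
              * p i (Function.update σ i u)
            = ∑ u : S i, ((if u = t then (0:ℝ) else mstar u) * p i (Function.update σ i u)
                + mstar t * (mt u * p i (Function.update σ i u))) := by
              apply Finset.sum_congr rfl; intro u _; ring
          _ = _ := by rw [Finset.sum_add_distrib, l2, ← Finset.mul_sum]
      have : mstar t * p i (Function.update σ i t) < mstar t * MixPay p i mt σ :=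
        mul_lt_mul_of_pos_left hdomt htpos
      simp only [hgdef]
      rw [epay]; linarith
    have hm'K : m' ∈ K := hm'mix
    have hle : F m' ≤ F mstar := hmax hm'K
    have hlt : F mstar < F m' := by
      rw [hFdef]
      simp only
      rw [Finset.lt_inf'_iff]
      intro σ hσ
      exact lt_of_le_of_lt (Finset.inf'_le _ hσ) (hkey σ hσ)
    linarith
  -- positivity of the value at the maximizer
  have hpos0 : 0 < F m0 := by
    rw [hFdef]
    simp only
    rw [Finset.lt_inf'_iff]
    intro σ hσ
    have hσR : ∀ j, j ≠ i → σ j ∈ R j := fun j hj => hsub j ((hTmem σ).1 hσ j hj)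
    have := hm0dom σ hσR
    simp only [hgdef]; linarith
  have hpos : 0 < F mstar := lt_of_lt_of_le hpos0 (hmax hm0mix)
  refine ⟨mstar, ⟨hmKmix.1, hsupp, hmKmix.2.2⟩, ?_⟩
  intro σ hσ
  have hσT : σ ∈ T := (hTmem σ).2 hσ
  have := Finset.inf'_le (fun σ => g σ mstar) hσT
  have h2 : F mstar ≤ g σ mstar := this
  simp only [hgdef] at h2
  linarith
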